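/- Define t*_n(ε) = sup{t > 0 : P^n(B_{n,t}^c) ≤ ε} where B_{n,t} = {x_1^n : P^n(x_1^n)/Q^n(x_1^n) > e^{nt}}. Then for any ε ∈ (0,1), t*_n(ε) ≥ D(P‖Q) - C_X(P,Q)·√(2 log(1/ε)/n). -/

import Mathlib

open Finset Filter Real
open scoped BigOperators Classical ENNReal

/-- The n-fold product (i.i.d.) probability mass function on `Fin n → X`. -/
noncomputable def prodP {X : Type*} [Fintype X] (P : X → ℝ) (n : ℕ) (x : Fin n → X) : ℝ :=
  ∏ i, P (x i)

/-- Kullback–Leibler divergence (natural logarithm). -/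
noncomputable def KL {X : Type*} [Fintype X] (P Q : X → ℝ) : ℝ :=
  ∑ x, P x * Real.log (P x / Q x)

/-- `C_X(P,Q) = sup_{x : P(x) > 0} |log (P(x)/Q(x))|`. -/
noncomputable def Cx {X : Type*} [Fintype X] (P Q : X → ℝ) : ℝ :=
  ⨆ x : {x : X // 0 < P x}, |Real.log (P x.1 / Q x.1)|

/-- Minimal Type II error probability under a Type I error constraint `ε`. -/
noncomputable def beta {X : Type*} [Fintype X] [DecidableEq X] (P Q : X → ℝ) (n : ℕ)
    (ε : ℝ) : ℝ :=
  sInf {b : ℝ | ∃ A : Finset (Fin n → X),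
    (∑ x ∈ Aᶜ, prodP P n x) ≤ ε ∧ b = ∑ x ∈ A, prodP Q n x}


lemma hoeff_core (p : ℝ) (hp0 : 0 ≤ p) (hp1 : p ≤ 1) (h : ℝ) :
    p * Real.exp ((1 - p) * h) + (1 - p) * Real.exp (-(p * h)) ≤ Real.exp (h ^ 2 / 8) := by
  rcases eq_or_lt_of_le hp0 with h0 | h0
  · subst h0
    have : (0:ℝ) * Real.exp ((1 - 0) * h) + (1 - 0) * Real.exp (-(0 * h)) = 1 := by simp
    rw [this]
    exact Real.one_le_exp (by positivity)
  rcases eq_or_lt_of_le hp1 with h1 | h1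
  · subst h1
    calc (1:ℝ) * Real.exp ((1 - 1) * h) + (1 - 1) * Real.exp (-(1 * h)) = 1 := by simp
      _ ≤ Real.exp (h ^ 2 / 8) := Real.one_le_exp (by positivity)
  have hq : 0 < 1 - p := by linarith
  set a : ℝ → ℝ := fun t => Real.exp ((1 - p) * t) with ha
  set b : ℝ → ℝ := fun t => Real.exp (-(p * t)) with hb
  set f : ℝ → ℝ := fun t => p * a t + (1 - p) * b t with hf
  set f1 : ℝ → ℝ := fun t => p * (1 - p) * (a t - b t) with hf1
  set ψ : ℝ → ℝ := fun t => t / 4 - f1 t / f t with hψ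
  set φ : ℝ → ℝ := fun t => t ^ 2 / 8 - Real.log (f t) with hφ
  have ha' : ∀ t, HasDerivAt a ((1 - p) * a t) t := by
    intro t
    have := ((hasDerivAt_id t).const_mul (1 - p)).exp
    simpa [ha, mul_comm] using this
  have hb' : ∀ t, HasDerivAt b (-p * b t) t := by
    intro t
    have := (((hasDerivAt_id t).const_mul p).neg).exp
    simpa [hb, mul_comm] using this
  have hfpos : ∀ t, 0 < f t := by
    intro t
    have := Real.exp_pos ((1 - p) * t)
    have := Real.exp_pos (-(p * t))
    simp only [hf, ha, hb]
    positivity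
  have hf' : ∀ t, HasDerivAt f (f1 t) t := by
    intro t
    have := ((ha' t).const_mul p).add ((hb' t).const_mul (1 - p))
    refine this.congr_deriv ?_
    simp only [hf1]
    ring
  have hf1' : ∀ t, HasDerivAt f1 (p * (1 - p) * ((1 - p) * a t + p * b t)) t := by
    intro t
    have := (((ha' t).sub (hb' t)).const_mul (p * (1 - p)))
    refine this.congr_deriv ?_
    ring
  have hψ' : ∀ t, HasDerivAt ψ
      (1 / 4 - (p * (1 - p) * ((1 - p) * a t + p * b t) * f t - f1 t * f1 t) / f t ^ 2) t := by
    intro t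
    have hdiv := (hf1' t).div (hf' t) (hfpos t).ne'
    have hlin : HasDerivAt (fun s : ℝ => s / 4) (1 / 4) t := by
      simpa using (hasDerivAt_id t).div_const 4
    exact hlin.sub hdiv
  have hψderiv_nonneg : ∀ t, 0 ≤ 1 / 4 -
      (p * (1 - p) * ((1 - p) * a t + p * b t) * f t - f1 t * f1 t) / f t ^ 2 := by
    intro t
    have key : p * (1 - p) * ((1 - p) * a t + p * b t) * f t - f1 t * f1 t
        = p * (1 - p) * (a t * b t) := by
      simp only [hf, hf1]; ring
    rw [key, sub_nonneg, div_le_iff₀ (by positivity : (0:ℝ) < f t ^ 2)]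
    simp only [hf]
    nlinarith [sq_nonneg (p * a t - (1 - p) * b t)]
  have hψ0 : ψ 0 = 0 := by
    simp [hψ, hf1, ha, hb]
  have hψmono : Monotone ψ := by
    apply monotone_of_deriv_nonneg
    · exact fun t => (hψ' t).differentiableAt
    · intro t
      rw [(hψ' t).deriv]
      exact hψderiv_nonneg t
  have hφ' : ∀ t, HasDerivAt φ (ψ t) t := by
    intro t
    have h1 : HasDerivAt (fun s : ℝ => s ^ 2 / 8) (t / 4) t := by
      have := (hasDerivAt_pow 2 t).div_const 8
      refine this.congr_deriv ?_
      push_cast; ring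
    have h2 := (hf' t).log (hfpos t).ne'
    exact h1.sub h2
  have hφ0 : φ 0 = 0 := by
    simp [hφ, hf, ha, hb]
  have hφnonneg : ∀ t, 0 ≤ φ t := by
    intro t
    rcases le_total 0 t with ht | ht
    · have hmono : MonotoneOn φ (Set.Ici (0:ℝ)) := by
        apply monotoneOn_of_deriv_nonneg (convex_Ici 0)
        · exact (continuous_iff_continuousAt.mpr fun s => (hφ' s).differentiableAt.continuousAt).continuousOn
        · intro s hs
          exact (hφ' s).differentiableAt.differentiableWithinAt
        · intro s hs
          rw [(hφ' s).deriv]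
          have : ψ 0 ≤ ψ s := hψmono (le_of_lt (by simpa using hs))
          linarith [hψ0]
      have := hmono (Set.mem_Ici.mpr le_rfl) (Set.mem_Ici.mpr ht) ht
      linarith [hφ0]
    · have hmono : AntitoneOn φ (Set.Iic (0:ℝ)) := by
        apply antitoneOn_of_deriv_nonpos (convex_Iic 0)
        · exact (continuous_iff_continuousAt.mpr fun s => (hφ' s).differentiableAt.continuousAt).continuousOn
        · intro s hs
          exact (hφ' s).differentiableAt.differentiableWithinAt
        · intro s hs
          rw [(hφ' s).deriv]
          have : ψ s ≤ ψ 0 := hψmono (le_of_lt (by simpa using hs))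
          linarith [hψ0]
      have := hmono (Set.mem_Iic.mpr ht) (Set.mem_Iic.mpr le_rfl) ht
      linarith [hφ0]
  have hlog : Real.log (f h) ≤ h ^ 2 / 8 := by
    have := hφnonneg h
    simp only [hφ] at this
    linarith
  calc p * Real.exp ((1 - p) * h) + (1 - p) * Real.exp (-(p * h)) = f h := rfl
    _ = Real.exp (Real.log (f h)) := (Real.exp_log (hfpos h)).symm
    _ ≤ Real.exp (h ^ 2 / 8) := Real.exp_le_exp.mpr hlog

lemma mgf_bound {X : Type*} [Fintype X] (P : X → ℝ) (z : X → ℝ) (C : ℝ) (hC : 0 < C)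
    (hP0 : ∀ x, 0 ≤ P x) (hP1 : ∑ x, P x = 1) (hz : ∀ x, 0 < P x → |z x| ≤ C) (s : ℝ) :
    ∑ x, P x * Real.exp (s * z x)
      ≤ Real.exp (s * (∑ x, P x * z x) + s ^ 2 * C ^ 2 / 2) := by
  set μ := ∑ x, P x * z x with hμdef
  have hμ : |μ| ≤ C := by
    calc |μ| ≤ ∑ x, |P x * z x| := Finset.abs_sum_le_sum_abs _ _
      _ ≤ ∑ x, P x * C := by
          apply Finset.sum_le_sum
          intro x _
          rcases eq_or_lt_of_le (hP0 x) with h | h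
          · simp [← h]
          · rw [abs_mul, abs_of_pos h]
            exact mul_le_mul_of_nonneg_left (hz x h) h.le
      _ = C := by rw [← Finset.sum_mul, hP1, one_mul]
  have hμC1 : -C ≤ μ := (abs_le.mp hμ).1
  have hμC2 : μ ≤ C := (abs_le.mp hμ).2
  -- chord step
  have step1 : ∑ x, P x * Real.exp (s * z x)
      ≤ ((C - μ) / (2 * C)) * Real.exp (-(s * C)) + ((C + μ) / (2 * C)) * Real.exp (s * C) := by
    have per : ∀ x, P x * Real.exp (s * z x)
        ≤ P x * (((C - z x) / (2 * C)) * Real.exp (-(s * C))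
            + ((C + z x) / (2 * C)) * Real.exp (s * C)) := by
      intro x
      rcases eq_or_lt_of_le (hP0 x) with h | h
      · simp [← h]
      · apply mul_le_mul_of_nonneg_left _ h.le
        have hzx := abs_le.mp (hz x h)
        have ht0 : (0:ℝ) ≤ (C - z x) / (2 * C) := by
          apply div_nonneg (by linarith [hzx.2]) (by linarith)
        have hu0 : (0:ℝ) ≤ (C + z x) / (2 * C) := by
          apply div_nonneg (by linarith [hzx.1]) (by linarith)
        have htu : (C - z x) / (2 * C) + (C + z x) / (2 * C) = 1 := by
          field_simp; ring
        have := convexOn_exp.2 (Set.mem_univ (-(s * C))) (Set.mem_univ (s * C)) ht0 hu0 htu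
        simp only [smul_eq_mul] at this
        have harg : (C - z x) / (2 * C) * -(s * C) + (C + z x) / (2 * C) * (s * C)
            = s * z x := by field_simp; ring
        rwa [harg] at this
    calc ∑ x, P x * Real.exp (s * z x)
        ≤ ∑ x, P x * (((C - z x) / (2 * C)) * Real.exp (-(s * C))
            + ((C + z x) / (2 * C)) * Real.exp (s * C)) := Finset.sum_le_sum fun x _ => per x
      _ = (∑ x, P x * (C - z x)) / (2 * C) * Real.exp (-(s * C))
          + (∑ x, P x * (C + z x)) / (2 * C) * Real.exp (s * C) := by
          rw [Finset.sum_div, Finset.sum_div, Finset.sum_mul, Finset.sum_mul,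
            ← Finset.sum_add_distrib]
          apply Finset.sum_congr rfl
          intro x _
          ring
      _ = ((C - μ) / (2 * C)) * Real.exp (-(s * C)) + ((C + μ) / (2 * C)) * Real.exp (s * C) := by
          have e1 : ∑ x, P x * (C - z x) = C - μ := by
            simp only [mul_sub]
            rw [Finset.sum_sub_distrib, ← Finset.sum_mul, hP1, one_mul, ← hμdef]
          have e2 : ∑ x, P x * (C + z x) = C + μ := by
            simp only [mul_add]
            rw [Finset.sum_add_distrib, ← Finset.sum_mul, hP1, one_mul, ← hμdef]
          rw [e1, e2]
  -- core step
  have step2 : ((C - μ) / (2 * C)) * Real.exp (-(s * C)) + ((C + μ) / (2 * C)) * Real.exp (s * C)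
      ≤ Real.exp (s * μ + s ^ 2 * C ^ 2 / 2) := by
    set p := (C + μ) / (2 * C) with hpdef
    have hp0 : 0 ≤ p := div_nonneg (by linarith) (by linarith)
    have hp1 : p ≤ 1 := by
      rw [hpdef, div_le_one (by linarith)]; linarith
    have h1p : 1 - p = (C - μ) / (2 * C) := by
      rw [hpdef]; field_simp; ring
    have hcore := hoeff_core p hp0 hp1 (2 * s * C)
    have hmul := mul_le_mul_of_nonneg_left hcore (Real.exp_pos (s * μ)).le
    have lhs_eq : Real.exp (s * μ) * (p * Real.exp ((1 - p) * (2 * s * C))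
        + (1 - p) * Real.exp (-(p * (2 * s * C))))
        = ((C - μ) / (2 * C)) * Real.exp (-(s * C)) + ((C + μ) / (2 * C)) * Real.exp (s * C) := by
      rw [h1p, hpdef]
      have a1 : (C - μ) / (2 * C) * (2 * s * C) = s * C - s * μ := by field_simp
      have a2 : -((C + μ) / (2 * C) * (2 * s * C)) = -(s * C) - s * μ := by field_simp; ring
      rw [a1, a2]
      rw [Real.exp_sub, Real.exp_sub]
      field_simp [Real.exp_ne_zero]
      ring
    have rhs_eq : Real.exp (s * μ) * Real.exp ((2 * s * C) ^ 2 / 8)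
        = Real.exp (s * μ + s ^ 2 * C ^ 2 / 2) := by
      rw [← Real.exp_add]
      congr 1
      ring
    rw [lhs_eq, rhs_eq] at hmul
    exact hmul
  exact step1.trans step2

set_option maxHeartbeats 2000000 in
theorem threshold_lower_bound
    {X : Type*} [Fintype X] [DecidableEq X] (P Q : X → ℝ)
    (hP0 : ∀ x, 0 ≤ P x) (hP1 : ∑ x, P x = 1)
    (hQ0 : ∀ x, 0 ≤ Q x) (hQ1 : ∑ x, Q x = 1)
    (hac : ∀ x, Q x = 0 → P x = 0)
    (n : ℕ) (hn : 1 ≤ n) (ε : ℝ) (hε0 : 0 < ε) (hε1 : ε < 1)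
    (hC : 0 < Cx P Q)
    (hpos : 0 < KL P Q - Cx P Q * Real.sqrt (2 * Real.log (1 / ε) / n)) :
    KL P Q - Cx P Q * Real.sqrt (2 * Real.log (1 / ε) / n)
      ≤ sSup {t : ℝ | 0 < t ∧
          (∑ x ∈ (univ.filter (fun x : Fin n → X =>
              Real.exp (n * t) < prodP P n x / prodP Q n x))ᶜ, prodP P n x) ≤ ε} := by
  set C := Cx P Q with hCdef
  set z : X → ℝ := fun y => Real.log (P y / Q y) with hzdef
  have hnpos : (0:ℝ) < n := by exact_mod_cast hn
  -- |z| ≤ C whenever P > 0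
  have hzC : ∀ y, 0 < P y → |z y| ≤ C := by
    intro y hy
    have hbdd : BddAbove (Set.range fun x : {x : X // 0 < P x} => |Real.log (P x.1 / Q x.1)|) :=
      (Set.finite_range _).bddAbove
    exact le_ciSup hbdd (⟨y, hy⟩ : {x : X // 0 < P x})
  have hPQpos : ∀ y, 0 < P y → 0 < Q y := by
    intro y hy
    rcases eq_or_lt_of_le (hQ0 y) with h | h
    · exact absurd (hac y h.symm) (ne_of_gt hy)
    · exact h
  -- exp/log for the likelihood ratio
  have hratio : ∀ x : Fin n → X, (∀ i, 0 < P (x i)) →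
      prodP P n x / prodP Q n x = Real.exp (∑ i, z (x i)) := by
    intro x hx
    rw [Real.exp_sum]
    unfold prodP
    rw [← Finset.prod_div_distrib]
    apply Finset.prod_congr rfl
    intro i _
    rw [hzdef, Real.exp_log (div_pos (hx i) (hPQpos _ (hx i)))]
  -- total mass of prodP P is 1
  have htotal : ∑ x : Fin n → X, prodP P n x = 1 := by
    calc ∑ x : Fin n → X, prodP P n x = ∑ x : Fin n → X, ∏ i, P (x i) := rfl
      _ = ∏ _i : Fin n, ∑ y, P y := (Fintype.prod_sum _).symm
      _ = 1 := by simp [hP1]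
  set δ := Real.sqrt (2 * Real.log (1 / ε) / n) with hδdef
  have hlogε : 0 < Real.log (1 / ε) := Real.log_pos ((one_lt_div hε0).mpr hε1)
  have hδpos : 0 < δ := Real.sqrt_pos.mpr (by positivity)
  have hδsq : δ ^ 2 = 2 * Real.log (1 / ε) / n := Real.sq_sqrt (by positivity)
  set t0 := KL P Q - C * δ with ht0def
  set lam := δ / C with hlamdef
  have hlampos : 0 < lam := div_pos hδpos hC
  -- the key probability bound
  have hKLz : KL P Q = ∑ y, P y * z y := rfl
  have hgsum : ∑ y, P y * Real.exp (-lam * z y)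
      ≤ Real.exp (-lam * KL P Q + lam ^ 2 * C ^ 2 / 2) := by
    have := mgf_bound P z C hC hP0 hP1 hzC (-lam)
    rw [hKLz]
    simpa using this
  have hgnonneg : (0:ℝ) ≤ ∑ y, P y * Real.exp (-lam * z y) :=
    Finset.sum_nonneg fun y _ => mul_nonneg (hP0 y) (Real.exp_pos _).le
  have hmem : t0 ∈ {t : ℝ | 0 < t ∧
      (∑ x ∈ (univ.filter (fun x : Fin n → X =>
          Real.exp (n * t) < prodP P n x / prodP Q n x))ᶜ, prodP P n x) ≤ ε} := by
    constructor
    · exact hpos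
    -- per-term bound
    have hterm : ∀ x ∈ (univ.filter (fun x : Fin n → X =>
        Real.exp (n * t0) < prodP P n x / prodP Q n x))ᶜ,
        prodP P n x ≤ Real.exp (lam * (n * t0)) * ∏ i, (P (x i) * Real.exp (-lam * z (x i))) := by
      intro x hx
      by_cases hPx : prodP P n x = 0
      · rw [hPx]
        have : (0:ℝ) ≤ ∏ i, (P (x i) * Real.exp (-lam * z (x i))) :=
          Finset.prod_nonneg fun i _ => mul_nonneg (hP0 _) (Real.exp_pos _).le
        positivity
      · have hPpos : ∀ i, 0 < P (x i) := by
          intro i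
          rcases eq_or_lt_of_le (hP0 (x i)) with h | h
          · exact absurd (Finset.prod_eq_zero (Finset.mem_univ i) h.symm) hPx
          · exact h
        rw [Finset.mem_compl, Finset.mem_filter] at hx
        push_neg at hx
        have hle : prodP P n x / prodP Q n x ≤ Real.exp (n * t0) := hx (Finset.mem_univ x)
        rw [hratio x hPpos] at hle
        have hZ : ∑ i, z (x i) ≤ n * t0 := Real.exp_le_exp.mp hle
        have h1 : (1:ℝ) ≤ Real.exp (lam * (n * t0 - ∑ i, z (x i))) :=
          Real.one_le_exp (by nlinarith)
        calc prodP P n x = 1 * prodP P n x := (one_mul _).symm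
          _ ≤ Real.exp (lam * (n * t0 - ∑ i, z (x i))) * prodP P n x := by
              apply mul_le_mul_of_nonneg_right h1
              exact Finset.prod_nonneg fun i _ => hP0 _
          _ = Real.exp (lam * (n * t0)) * ∏ i, (P (x i) * Real.exp (-lam * z (x i))) := by
              unfold prodP
              rw [Finset.prod_mul_distrib, ← Real.exp_sum]
              have hexp : Real.exp (lam * (↑n * t0 - ∑ i, z (x i)))
                  = Real.exp (lam * (↑n * t0)) * Real.exp (∑ i, -lam * z (x i)) := by
                rw [← Real.exp_add]
                congr 1
                simp only [neg_mul, Finset.sum_neg_distrib, ← Finset.mul_sum]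
                ring
              rw [hexp]
              ring
    -- sum the bound
    have hsum : (∑ x ∈ (univ.filter (fun x : Fin n → X =>
        Real.exp (n * t0) < prodP P n x / prodP Q n x))ᶜ, prodP P n x)
        ≤ Real.exp (lam * (n * t0)) *
            (∑ y, P y * Real.exp (-lam * z y)) ^ n := by
      have tensor : ∑ x : Fin n → X, ∏ i, (P (x i) * Real.exp (-lam * z (x i)))
          = (∑ y, P y * Real.exp (-lam * z y)) ^ n := by
        calc ∑ x : Fin n → X, ∏ i, (P (x i) * Real.exp (-lam * z (x i)))
            = ∏ _i : Fin n, ∑ y, (P y * Real.exp (-lam * z y)) :=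
              (Fintype.prod_sum (fun (_ : Fin n) (y : X) => P y * Real.exp (-lam * z y))).symm
          _ = (∑ y, P y * Real.exp (-lam * z y)) ^ n := by
              rw [Finset.prod_const]; simp
      calc (∑ x ∈ (univ.filter (fun x : Fin n → X =>
            Real.exp (n * t0) < prodP P n x / prodP Q n x))ᶜ, prodP P n x)
          ≤ ∑ x ∈ (univ.filter (fun x : Fin n → X =>
            Real.exp (n * t0) < prodP P n x / prodP Q n x))ᶜ,
              Real.exp (lam * (n * t0)) * ∏ i, (P (x i) * Real.exp (-lam * z (x i))) :=
            Finset.sum_le_sum hterm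
        _ ≤ ∑ x : Fin n → X,
              Real.exp (lam * (n * t0)) * ∏ i, (P (x i) * Real.exp (-lam * z (x i))) := by
            apply Finset.sum_le_sum_of_subset_of_nonneg (Finset.subset_univ _)
            intro x _ _
            have : (0:ℝ) ≤ ∏ i, (P (x i) * Real.exp (-lam * z (x i))) :=
              Finset.prod_nonneg fun i _ => mul_nonneg (hP0 _) (Real.exp_pos _).le
            positivity
        _ = Real.exp (lam * (n * t0)) *
              ∑ x : Fin n → X, ∏ i, (P (x i) * Real.exp (-lam * z (x i))) := by
            rw [Finset.mul_sum]
        _ = Real.exp (lam * (n * t0)) * (∑ y, P y * Real.exp (-lam * z y)) ^ n := by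
            rw [tensor]
    have hfinal : Real.exp (lam * (n * t0)) * (∑ y, P y * Real.exp (-lam * z y)) ^ n ≤ ε := by
      have hpow : (∑ y, P y * Real.exp (-lam * z y)) ^ n
          ≤ Real.exp (-lam * KL P Q + lam ^ 2 * C ^ 2 / 2) ^ n :=
        pow_le_pow_left₀ hgnonneg hgsum n
      calc Real.exp (lam * (n * t0)) * (∑ y, P y * Real.exp (-lam * z y)) ^ n
          ≤ Real.exp (lam * (n * t0)) * Real.exp (-lam * KL P Q + lam ^ 2 * C ^ 2 / 2) ^ n := by
            apply mul_le_mul_of_nonneg_left hpow (Real.exp_pos _).le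
        _ = Real.exp (lam * (n * t0) + n * (-lam * KL P Q + lam ^ 2 * C ^ 2 / 2)) := by
            rw [← Real.exp_nat_mul, ← Real.exp_add]
        _ = ε := by
            have harg : lam * (n * t0) + n * (-lam * KL P Q + lam ^ 2 * C ^ 2 / 2)
                = Real.log ε := by
              have hCne : C ≠ 0 := ne_of_gt hC
              have hlam2 : lam * C = δ := by
                rw [hlamdef]; field_simp
              have h1 : lam * (n * t0) + n * (-lam * KL P Q + lam ^ 2 * C ^ 2 / 2)
                  = n * (-(lam * C) * δ + (lam * C) ^ 2 / 2) := by
                rw [ht0def]; ring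
              rw [h1, hlam2]
              have h2 : (n:ℝ) * (-δ * δ + δ ^ 2 / 2) = -(n * δ ^ 2 / 2) := by ring
              rw [h2]
              have h3 : (n:ℝ) * δ ^ 2 / 2 = Real.log (1 / ε) := by
                rw [hδsq]; field_simp
              rw [h3]
              rw [Real.log_div one_ne_zero (ne_of_gt hε0), Real.log_one]
              ring
            rw [harg, Real.exp_log hε0]
    exact hsum.trans hfinal
  -- boundedness above
  have hbdd : BddAbove {t : ℝ | 0 < t ∧
      (∑ x ∈ (univ.filter (fun x : Fin n → X =>
          Real.exp (n * t) < prodP P n x / prodP Q n x))ᶜ, prodP P n x) ≤ ε} := by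
    refine ⟨C, fun t ht => ?_⟩
    by_contra hlt
    push_neg at hlt
    have hempty : (univ.filter (fun x : Fin n → X =>
        Real.exp (n * t) < prodP P n x / prodP Q n x)) = ∅ := by
      rw [Finset.filter_eq_empty_iff]
      intro x _
      push_neg
      by_cases hPx : prodP P n x = 0
      · have hQge : 0 ≤ prodP Q n x := Finset.prod_nonneg fun i _ => hQ0 _
        rw [hPx, zero_div]
        exact (Real.exp_pos _).le
      · have hPpos : ∀ i, 0 < P (x i) := by
          intro i
          rcases eq_or_lt_of_le (hP0 (x i)) with h | h
          · exact absurd (Finset.prod_eq_zero (Finset.mem_univ i) h.symm) hPx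
          · exact h
        rw [hratio x hPpos]
        apply Real.exp_le_exp.mpr
        calc ∑ i, z (x i) ≤ ∑ _i : Fin n, C := by
              apply Finset.sum_le_sum
              intro i _
              exact le_of_abs_le (hzC _ (hPpos i))
          _ = n * C := by simp [mul_comm]
          _ ≤ n * t := by nlinarith
    have hone : (1:ℝ) ≤ ε := by
      calc (1:ℝ) = ∑ x : Fin n → X, prodP P n x := htotal.symm
        _ = ∑ x ∈ (univ.filter (fun x : Fin n → X =>
              Real.exp (n * t) < prodP P n x / prodP Q n x))ᶜ, prodP P n x := by
            rw [hempty, Finset.compl_empty]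
        _ ≤ ε := ht.2
    linarith
  exact le_csSup hbdd hmem
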